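/- If a finite simple graph G is Hamiltonian, then for every set S of vertices such that the induced subgraph of G on the complement of S is disconnected (has at least two connected components), the number of connected components of that induced subgraph is at most |S|. (Thus every Hamiltonian graph is 1-tough.) -/

import Mathlib

open SimpleGraph

lemma walk_support_eq_map_getVert {V : Type*} {G : SimpleGraph V} {u v : V} (p : G.Walk u v) :
    p.support = (List.range (p.length + 1)).map p.getVert := by
  induction p with
  | nil => simp [SimpleGraph.Walk.getVert]
  | @cons a b c h q ih =>
    rw [SimpleGraph.Walk.support_cons, SimpleGraph.Walk.length_cons,
      List.range_succ_eq_map]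
    rw [List.map_cons, List.map_map, ih]
    rfl

theorem hamiltonian_is_one_tough
    {V : Type*} [Fintype V] [DecidableEq V] (G : SimpleGraph V) (hG : G.IsHamiltonian)
    (S : Finset V)
    (hdisc : 2 ≤ Nat.card ((G.induce ((↑S : Set V)ᶜ)).ConnectedComponent)) :
    Nat.card ((G.induce ((↑S : Set V)ᶜ)).ConnectedComponent) ≤ S.card := by
  set G' := G.induce ((↑S : Set V)ᶜ) with hG'
  have hnt : Nontrivial G'.ConnectedComponent :=
    Finite.one_lt_card_iff_nontrivial.mp (by omega)
  -- V has at least two elements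
  have hcard : Fintype.card V ≠ 1 := by
    obtain ⟨C₁, C₂, hC⟩ := hnt
    obtain ⟨x, rfl⟩ := C₁.exists_rep
    obtain ⟨y, rfl⟩ := C₂.exists_rep
    have hxy : (x : V) ≠ (y : V) := by
      intro h; exact hC (by rw [Subtype.ext h])
    intro h1
    exact hxy (Subsingleton.elim (α := V)
      (h := Fintype.card_le_one_iff_subsingleton.mp h1.le) _ _)
  obtain ⟨a, p, hp⟩ := hG hcard
  set n := p.length with hn
  have hn3 : 3 ≤ n := hp.isCycle.three_le_length
  have hn0 : 0 < n := by omega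
  -- injectivity of getVert on [1, n]
  have hinj : ∀ i j, 1 ≤ i → i ≤ n → 1 ≤ j → j ≤ n →
      p.getVert i = p.getVert j → i = j := by
    have hnodup : p.support.tail.Nodup := hp.isCycle.support_nodup
    rw [walk_support_eq_map_getVert, List.range_succ_eq_map, List.map_cons,
      List.tail_cons, List.map_map] at hnodup
    have h2 := (List.nodup_map_iff_inj_on (List.nodup_range : (List.range n).Nodup)).mp hnodup
    intro i j h1i h2i h1j h2j hij
    have := h2 (i - 1) (List.mem_range.mpr (by omega)) (j - 1)
      (List.mem_range.mpr (by omega)) ?_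
    · omega
    · simp only [Function.comp_apply, Nat.succ_eq_add_one]
      have hi' : i - 1 + 1 = i := by omega
      have hj' : j - 1 + 1 = j := by omega
      rw [hi', hj', hij]
  -- surjectivity of getVert from [1, n]
  have hsurj : ∀ v : V, ∃ i, 1 ≤ i ∧ i ≤ n ∧ p.getVert i = v := by
    intro v
    obtain ⟨i, hiv, hile⟩ :=
      SimpleGraph.Walk.mem_support_iff_exists_getVert.mp (hp.mem_support v)
    rcases Nat.eq_zero_or_pos i with h0 | h0
    · refine ⟨n, by omega, le_rfl, ?_⟩
      rw [SimpleGraph.Walk.getVert_length]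
      rw [h0, SimpleGraph.Walk.getVert_zero] at hiv
      exact hiv
    · exact ⟨i, h0, hile, hiv⟩
  choose idx hidx1 hidxn hidxv using hsurj
  -- the successor function along the cycle
  set f : V → V := fun v => p.getVert (idx v % n + 1) with hf
  have hmodlt : ∀ i : ℕ, i % n < n := fun i => Nat.mod_lt _ hn0
  have hidx_gv : ∀ j, 1 ≤ j → j ≤ n → idx (p.getVert j) = j := by
    intro j h1 h2
    exact hinj _ _ (hidx1 _) (hidxn _) h1 h2 (hidxv _)
  set g : ℕ → V := fun i => p.getVert (i % n + 1) with hg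
  have hgsucc : ∀ i, f (g i) = g (i + 1) := by
    intro i
    have h1 : idx (g i) = i % n + 1 :=
      hidx_gv _ (by omega) (by have := hmodlt i; omega)
    simp only [hf, h1]
    simp only [hg]
    congr 2
    conv_rhs => rw [Nat.add_mod, Nat.mod_eq_of_lt (show 1 < n by omega)]
  have hgsurj : ∀ v : V, g (idx v - 1) = v := by
    intro v
    have h1 := hidx1 v; have h2 := hidxn v
    simp only [hg]
    rw [Nat.mod_eq_of_lt (by omega)]
    rw [show idx v - 1 + 1 = idx v by omega]
    exact hidxv v
  have hadj : ∀ v, G.Adj v (f v) := by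
    intro v
    have h1 := hidx1 v; have h2 := hidxn v
    rcases h2.lt_or_eq with h | h
    · have : idx v % n = idx v := Nat.mod_eq_of_lt h
      rw [hf]; simp only [this]
      have := p.adj_getVert_succ (i := idx v) h
      rwa [hidxv v] at this
    · have hv : v = p.getVert 0 := by
        rw [← hidxv v, h, SimpleGraph.Walk.getVert_length,
          SimpleGraph.Walk.getVert_zero]
      rw [hf]; simp only [h, Nat.mod_self]
      have := p.adj_getVert_succ (i := 0) hn0
      rwa [← hv] at this
  have hfinj : Function.Injective f := by
    intro v w hvw
    simp only [hf] at hvw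
    have h1 := hidx1 v; have h2 := hidxn v
    have h3 := hidx1 w; have h4 := hidxn w
    have hmm : idx v % n = idx w % n := by
      have := hinj _ _ (by omega) (by have := hmodlt (idx v); omega)
        (by omega) (by have := hmodlt (idx w); omega) hvw
      omega
    have : idx v = idx w := by
      rcases h2.lt_or_eq with h | h <;> rcases h4.lt_or_eq with h' | h'
      · rwa [Nat.mod_eq_of_lt h, Nat.mod_eq_of_lt h'] at hmm
      · rw [Nat.mod_eq_of_lt h, h', Nat.mod_self] at hmm; omega
      · rw [h, Nat.mod_self, Nat.mod_eq_of_lt h'] at hmm; omega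
      · omega
    rw [← hidxv v, ← hidxv w, this]
  -- each component contains a vertex whose successor is in S
  have hkey : ∀ C : G'.ConnectedComponent,
      ∃ v : ((↑S : Set V)ᶜ : Set V), G'.connectedComponentMk v = C ∧ f ↑v ∈ S := by
    intro C
    by_contra hcon
    push_neg at hcon
    obtain ⟨v₀, hv₀⟩ := C.exists_rep
    set i₀ := idx (↑v₀ : V) - 1 with hi₀
    have hall : ∀ m, ∃ hm : g (i₀ + m) ∈ ((↑S : Set V)ᶜ),
        G'.connectedComponentMk ⟨g (i₀ + m), hm⟩ = C := by
      intro m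
      induction m with
      | zero =>
        have : g (i₀ + 0) = ↑v₀ := by rw [Nat.add_zero]; exact hgsurj _
        refine ⟨by rw [this]; exact v₀.2, ?_⟩
        have : (⟨g (i₀ + 0), by rw [this]; exact v₀.2⟩ :
            ((↑S : Set V)ᶜ : Set V)) = v₀ := Subtype.ext this
        rw [this]; exact hv₀
      | succ m ih =>
        obtain ⟨hm, hmk⟩ := ih
        have hfS : f (g (i₀ + m)) ∉ S := hcon ⟨g (i₀ + m), hm⟩ hmk
        have hfc : f (g (i₀ + m)) ∈ ((↑S : Set V)ᶜ) := by
          simpa using hfS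
        have hadj' : G'.Adj ⟨g (i₀ + m), hm⟩ ⟨f (g (i₀ + m)), hfc⟩ := by
          simp only [hG', SimpleGraph.comap_adj, Function.Embedding.coe_subtype]
          exact hadj _
        have heq : f (g (i₀ + m)) = g (i₀ + (m + 1)) := by
          rw [hgsucc, ← Nat.add_assoc]
        refine ⟨heq ▸ hfc, ?_⟩
        have := (SimpleGraph.ConnectedComponent.connectedComponentMk_eq_of_adj hadj').symm.trans hmk
        convert this using 2
        exact Subtype.ext heq.symm
    -- every vertex outside S is in C
    have hallC : ∀ w : ((↑S : Set V)ᶜ : Set V), G'.connectedComponentMk w = C := by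
      intro w
      set j₀ := idx (↑w : V) - 1 with hj₀
      have hj₀n : j₀ < n := by have := hidxn (↑w : V); have := hidx1 (↑w : V); omega
      set m := (n - i₀ % n) + j₀ with hm
      have hgm : g (i₀ + m) = ↑w := by
        have hmd := Nat.mod_add_div i₀ n
        have hmul : n * (i₀ / n + 1) = n * (i₀ / n) + n := by ring
        have him : i₀ + m = n * (i₀ / n + 1) + j₀ := by
          rw [hm]
          have h2 : i₀ % n < n := hmodlt i₀
          omega
        show p.getVert ((i₀ + m) % n + 1) = ↑w
        rw [him, Nat.mul_add_mod, Nat.mod_eq_of_lt hj₀n]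
        have h1w := hidx1 (↑w : V)
        rw [show j₀ + 1 = idx (↑w : V) by omega]
        exact hidxv _
      obtain ⟨hmem, hmk⟩ := hall m
      rw [← hmk]
      congr 1
      exact Subtype.ext hgm.symm
    obtain ⟨C', hC'⟩ := exists_ne C
    obtain ⟨w, hw⟩ := C'.exists_rep
    exact hC' (hw ▸ hallC w)
  choose vc hvc hvcS using hkey
  have hF : Function.Injective
      (fun C : G'.ConnectedComponent => (⟨f ↑(vc C), hvcS C⟩ : {x // x ∈ S})) := by
    intro C C' h
    simp only [Subtype.mk_eq_mk] at h
    have := hfinj h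
    have h2 : vc C = vc C' := Subtype.ext this
    rw [← hvc C, ← hvc C', h2]
  calc Nat.card G'.ConnectedComponent ≤ Nat.card {x // x ∈ S} :=
        Nat.card_le_card_of_injective _ hF
    _ = S.card := Nat.card_eq_finsetCard S
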